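/- Suppose the data points x₁,…,xₙ are affinely independent and the data are linearly separable (a hard-margin feasible pair exists). Let (w, b) be a hard margin solution, let v be a vector lying in the vectorSpan of the data that gives complete data piling (the maximal data piling direction), and let m = x̄₊ − x̄₋ be the mean difference, where x̄₊ and x̄₋ are the means of the positive and negative classes. Then w is proportional to m (∃ t ≠ 0, w = t • m) if and only if m is proportional to v (∃ t ≠ 0, m = t • v). -/

import Mathlib

open scoped RealInnerProductSpace BigOperators

variable {E : Type*} [NormedAddCommGroup E] [InnerProductSpace ℝ E]

open Classical in
/-- The index set of the positive class. -/
noncomputable def posSet {n : ℕ} (y : Fin n → ℝ) : Finset (Fin n) :=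
  Finset.univ.filter (fun i => y i = 1)

open Classical in
/-- The index set of the negative class. -/
noncomputable def negSet {n : ℕ} (y : Fin n → ℝ) : Finset (Fin n) :=
  Finset.univ.filter (fun i => y i = -1)

/-- The mean difference direction `x̄₊ - x̄₋`. -/
noncomputable def meanDiff {n : ℕ} (x : Fin n → E) (y : Fin n → ℝ) : E :=
  (((posSet y).card : ℝ)⁻¹ • ∑ i ∈ posSet y, x i) -
    (((negSet y).card : ℝ)⁻¹ • ∑ i ∈ negSet y, x i)

/-- A vector `v` gives complete data piling for the labeled data `(x, y)`. -/
def Piling {n : ℕ} (x : Fin n → E) (y : Fin n → ℝ) (v : E) : Prop :=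
  ∃ a b : ℝ, a ≠ 0 ∧ ∀ i, ⟪v, x i⟫ = a * y i + b

/-- `(w, b)` is feasible for the hard margin SVM problem. -/
def HardFeasible {n : ℕ} (x : Fin n → E) (y : Fin n → ℝ) (w : E) (b : ℝ) : Prop :=
  ∀ i, 1 ≤ y i * (⟪w, x i⟫ + b)

/-- `(w, b)` is a hard margin SVM solution. -/
def HardSolution {n : ℕ} (x : Fin n → E) (y : Fin n → ℝ) (w : E) (b : ℝ) : Prop :=
  HardFeasible x y w b ∧
    ∀ w' : E, ∀ b' : ℝ, HardFeasible x y w' b' → (1 / 2) * ‖w‖ ^ 2 ≤ (1 / 2) * ‖w'‖ ^ 2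

/-- For a linearly independent finite family, any prescribed inner products can be realized. -/
lemma aux_exists_inner_eq {ι : Type*} [Fintype ι] (v : ι → E)
    (hv : LinearIndependent ℝ v) (c : ι → ℝ) : ∃ u : E, ∀ i, ⟪u, v i⟫ = c i := by
  classical
  set W := Submodule.span ℝ (Set.range v) with hW
  haveI : FiniteDimensional ℝ W := FiniteDimensional.span_of_finite ℝ (Set.finite_range v)
  let f : W →ₗ[ℝ] (ι → ℝ) :=
    { toFun := fun u i => ⟪(u : E), v i⟫
      map_add' := by intro a b; funext i; simp [inner_add_left]
      map_smul' := by intro r a; funext i; simp [real_inner_smul_left]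
    }
  have hinj : Function.Injective f := by
    rw [← LinearMap.ker_eq_bot, Submodule.eq_bot_iff]
    rintro u hu
    have hz : ∀ i, ⟪(u : E), v i⟫ = 0 := by
      intro i
      have := congrFun (LinearMap.mem_ker.mp hu) i
      simpa [f] using this
    have hmem : (u : E) ∈ Submodule.span ℝ (Set.range v) := u.2
    have hle : Submodule.span ℝ (Set.range v) ≤ (ℝ ∙ (u : E))ᗮ := by
      rw [Submodule.span_le]
      rintro z ⟨i, rfl⟩
      rw [SetLike.mem_coe, Submodule.mem_orthogonal_singleton_iff_inner_right]
      exact hz i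
    have hself : ⟪(u : E), (u : E)⟫ = 0 := by
      have := hle hmem
      rwa [Submodule.mem_orthogonal_singleton_iff_inner_right] at this
    have : (u : E) = 0 := inner_self_eq_zero.mp hself
    exact Subtype.ext (by simpa using this)
  have hsurj : Function.Surjective f := by
    have h1 : Module.finrank ℝ W = Fintype.card ι := finrank_span_eq_card hv
    have h2 : Module.finrank ℝ (ι → ℝ) = Fintype.card ι := by
      simp [Module.finrank_fintype_fun_eq_card]
    exact (LinearMap.injective_iff_surjective_of_finrank_eq_finrank (by rw [h1, h2])).mp hinj
  obtain ⟨u, hu⟩ := hsurj c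
  exact ⟨(u : E), fun i => congrFun hu i⟩

/-- A vector in the vectorSpan with constant inner products against all points is zero. -/
lemma aux_eq_zero {n : ℕ} (x : Fin n → E) (u : E)
    (hu : u ∈ vectorSpan ℝ (Set.range x)) (h : ∀ i j : Fin n, ⟪u, x i⟫ = ⟪u, x j⟫) :
    u = 0 := by
  have key : vectorSpan ℝ (Set.range x) ≤ (ℝ ∙ u)ᗮ := by
    rw [vectorSpan_def, Submodule.span_le]
    rintro z ⟨p, ⟨i, rfl⟩, q, ⟨j, rfl⟩, rfl⟩
    rw [SetLike.mem_coe, Submodule.mem_orthogonal_singleton_iff_inner_left]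
    show ⟪x i -ᵥ x j, u⟫ = 0
    rw [vsub_eq_sub, inner_sub_left]
    linarith [h i j, real_inner_comm u (x i), real_inner_comm u (x j)]
  have hu' := key hu
  rw [Submodule.mem_orthogonal_singleton_iff_inner_right] at hu'
  exact inner_self_eq_zero.mp hu'

lemma aux_mem_posSet {n : ℕ} (y : Fin n → ℝ) (i : Fin n) : i ∈ posSet y ↔ y i = 1 := by
  simp [posSet]

lemma aux_mem_negSet {n : ℕ} (y : Fin n → ℝ) (i : Fin n) : i ∈ negSet y ↔ y i = -1 := by
  simp [negSet]

lemma aux_inner_meanDiff {n : ℕ} (x : Fin n → E) (y : Fin n → ℝ) (u : E) :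
    ⟪u, meanDiff x y⟫ = ((posSet y).card : ℝ)⁻¹ * ∑ i ∈ posSet y, ⟪u, x i⟫
      - ((negSet y).card : ℝ)⁻¹ * ∑ i ∈ negSet y, ⟪u, x i⟫ := by
  rw [meanDiff, inner_sub_right, real_inner_smul_right, real_inner_smul_right,
    inner_sum, inner_sum]

lemma aux_meanDiff_mem {n : ℕ} (x : Fin n → E) (y : Fin n → ℝ)
    (hpos : ∃ i, y i = 1) (hneg : ∃ i, y i = -1) :
    meanDiff x y ∈ vectorSpan ℝ (Set.range x) := by
  obtain ⟨i₀, hi₀⟩ := hpos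
  have hp : (0 : ℝ) < (posSet y).card := by
    exact_mod_cast Finset.card_pos.mpr ⟨i₀, (aux_mem_posSet y i₀).mpr hi₀⟩
  obtain ⟨i₁, hi₁⟩ := hneg
  have hq : (0 : ℝ) < (negSet y).card := by
    exact_mod_cast Finset.card_pos.mpr ⟨i₁, (aux_mem_negSet y i₁).mpr hi₁⟩
  have key : meanDiff x y = (((posSet y).card : ℝ)⁻¹ • ∑ i ∈ posSet y, (x i - x i₀)) -
      (((negSet y).card : ℝ)⁻¹ • ∑ i ∈ negSet y, (x i - x i₀)) := by
    rw [meanDiff, Finset.sum_sub_distrib, Finset.sum_sub_distrib, Finset.sum_const,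
      Finset.sum_const, smul_sub, smul_sub, ← Nat.cast_smul_eq_nsmul ℝ,
      ← Nat.cast_smul_eq_nsmul ℝ, smul_smul, smul_smul,
      inv_mul_cancel₀ hp.ne', inv_mul_cancel₀ hq.ne', one_smul]
    abel
  rw [key]
  have hmem : ∀ i : Fin n, x i - x i₀ ∈ vectorSpan ℝ (Set.range x) := fun i => by
    have := vsub_mem_vectorSpan ℝ (Set.mem_range_self (f := x) i) (Set.mem_range_self i₀)
    simpa [vsub_eq_sub] using this
  exact Submodule.sub_mem _
    (Submodule.smul_mem _ _ (Submodule.sum_mem _ fun i _ => hmem i))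
    (Submodule.smul_mem _ _ (Submodule.sum_mem _ fun i _ => hmem i))

lemma aux_pile_inner {n : ℕ} (x : Fin n → E) (y : Fin n → ℝ)
    (hpos : ∃ i, y i = 1) (hneg : ∃ i, y i = -1) (u : E) (A C : ℝ)
    (hpm : ∀ i, ⟪u, x i⟫ = A * y i + C) : ⟪u, meanDiff x y⟫ = 2 * A := by
  obtain ⟨i₀, hi₀⟩ := hpos
  have hp : (0 : ℝ) < (posSet y).card := by
    exact_mod_cast Finset.card_pos.mpr ⟨i₀, (aux_mem_posSet y i₀).mpr hi₀⟩
  obtain ⟨i₁, hi₁⟩ := hneg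
  have hq : (0 : ℝ) < (negSet y).card := by
    exact_mod_cast Finset.card_pos.mpr ⟨i₁, (aux_mem_negSet y i₁).mpr hi₁⟩
  have hsp : ∑ i ∈ posSet y, ⟪u, x i⟫ = ((posSet y).card : ℝ) * (A + C) := by
    rw [Finset.sum_congr rfl (fun i hi => by
      rw [hpm i, (aux_mem_posSet y i).mp hi]), Finset.sum_const, nsmul_eq_mul]
    ring
  have hsn : ∑ i ∈ negSet y, ⟪u, x i⟫ = ((negSet y).card : ℝ) * (C - A) := by
    rw [Finset.sum_congr rfl (fun i hi => by
      rw [hpm i, (aux_mem_negSet y i).mp hi]), Finset.sum_const, nsmul_eq_mul]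
    ring
  rw [aux_inner_meanDiff, hsp, hsn, ← mul_assoc, ← mul_assoc,
    inv_mul_cancel₀ hp.ne', inv_mul_cancel₀ hq.ne']
  ring

lemma aux_feas_bound {n : ℕ} (x : Fin n → E) (y : Fin n → ℝ)
    (hpos : ∃ i, y i = 1) (hneg : ∃ i, y i = -1) (w' : E) (b' : ℝ)
    (hf : HardFeasible x y w' b') : 2 ≤ ⟪w', meanDiff x y⟫ := by
  obtain ⟨i₀, hi₀⟩ := hpos
  have hp : (0 : ℝ) < (posSet y).card := by
    exact_mod_cast Finset.card_pos.mpr ⟨i₀, (aux_mem_posSet y i₀).mpr hi₀⟩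
  obtain ⟨i₁, hi₁⟩ := hneg
  have hq : (0 : ℝ) < (negSet y).card := by
    exact_mod_cast Finset.card_pos.mpr ⟨i₁, (aux_mem_negSet y i₁).mpr hi₁⟩
  have hsp : ((posSet y).card : ℝ) * (1 - b') ≤ ∑ i ∈ posSet y, ⟪w', x i⟫ := by
    calc ((posSet y).card : ℝ) * (1 - b') = ∑ _i ∈ posSet y, (1 - b') := by
          rw [Finset.sum_const, nsmul_eq_mul]
      _ ≤ ∑ i ∈ posSet y, ⟪w', x i⟫ := by
          refine Finset.sum_le_sum fun i hi => ?_
          have h1 := hf i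
          rw [(aux_mem_posSet y i).mp hi] at h1
          linarith
  have hsn : ∑ i ∈ negSet y, ⟪w', x i⟫ ≤ ((negSet y).card : ℝ) * (-1 - b') := by
    calc ∑ i ∈ negSet y, ⟪w', x i⟫ ≤ ∑ _i ∈ negSet y, (-1 - b') := by
          refine Finset.sum_le_sum fun i hi => ?_
          have h1 := hf i
          rw [(aux_mem_negSet y i).mp hi] at h1
          linarith
      _ = ((negSet y).card : ℝ) * (-1 - b') := by rw [Finset.sum_const, nsmul_eq_mul]
  rw [aux_inner_meanDiff]
  have e1 := mul_le_mul_of_nonneg_left hsp (inv_nonneg.mpr hp.le)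
  have e2 := mul_le_mul_of_nonneg_left hsn (inv_nonneg.mpr hq.le)
  rw [← mul_assoc, inv_mul_cancel₀ hp.ne', one_mul] at e1
  rw [← mul_assoc, inv_mul_cancel₀ hq.ne', one_mul] at e2
  linarith

theorem hard_margin_eq_md_iff_md_eq_mdp {n : ℕ} (x : Fin n → E) (y : Fin n → ℝ)
    (hy : ∀ i, y i = 1 ∨ y i = -1)
    (hpos : ∃ i, y i = 1) (hneg : ∃ i, y i = -1)
    (hind : AffineIndependent ℝ x)
    (hsep : ∃ w₀ : E, ∃ b₀ : ℝ, HardFeasible x y w₀ b₀)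
    (w : E) (b : ℝ) (hsol : HardSolution x y w b)
    (v : E) (hv_span : v ∈ vectorSpan ℝ (Set.range x)) (hv_pile : Piling x y v) :
    (∃ t : ℝ, t ≠ 0 ∧ w = t • meanDiff x y) ↔
      ∃ t : ℝ, t ≠ 0 ∧ meanDiff x y = t • v := by
  classical
  obtain ⟨a, c, ha, hpil⟩ := hv_pile
  set m := meanDiff x y with hm
  have h2m : 2 ≤ ⟪w, m⟫ := aux_feas_bound x y hpos hneg w b hsol.1
  constructor
  · -- hard direction: w = t • m implies m piles, hence m ∝ v
    rintro ⟨t, ht, hwtm⟩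
    -- Step 1: all constraints are tight
    have htight : ∀ i, y i * (⟪w, x i⟫ + b) = 1 := by
      by_contra hcon
      push_neg at hcon
      obtain ⟨j, hj⟩ := hcon
      have hjgt : 1 < y j * (⟪w, x j⟫ + b) := lt_of_le_of_ne (hsol.1 j) (Ne.symm hj)
      -- pick a base point in the other class
      obtain ⟨istar, histar⟩ : ∃ i, y i ≠ y j := by
        rcases hy j with h | h
        · obtain ⟨i₁, hi₁⟩ := hneg; exact ⟨i₁, by rw [hi₁, h]; norm_num⟩
        · obtain ⟨i₀, hi₀⟩ := hpos; exact ⟨i₀, by rw [hi₀, h]; norm_num⟩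
      have hnej : istar ≠ j := fun h => histar (by rw [h])
      have li : LinearIndependent ℝ (fun i : {i // i ≠ istar} => x ↑i - x istar) := by
        have := (affineIndependent_iff_linearIndependent_vsub ℝ x istar).mp hind
        simpa [vsub_eq_sub] using this
      obtain ⟨u, hu⟩ := aux_exists_inner_eq _ li
        (fun i => if (i : Fin n) = j then t * y j else 0)
      have hg : ∀ i : Fin n, ⟪u, x i⟫ = ⟪u, x istar⟫ + (if i = j then t * y j else 0) := by
        intro i
        by_cases hii : i = istar
        · subst hii; simp [hnej]
        · have h1 := hu ⟨i, hii⟩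
          simp only [inner_sub_right] at h1
          rcases eq_or_ne i j with h2 | h2
          · rw [if_pos h2]
            rw [if_pos h2] at h1
            linarith
          · rw [if_neg h2]
            rw [if_neg h2] at h1
            linarith
      have hp : (0 : ℝ) < (posSet y).card := by
        obtain ⟨i₀, hi₀⟩ := hpos
        exact_mod_cast Finset.card_pos.mpr ⟨i₀, (aux_mem_posSet y i₀).mpr hi₀⟩
      have hq : (0 : ℝ) < (negSet y).card := by
        obtain ⟨i₁, hi₁⟩ := hneg
        exact_mod_cast Finset.card_pos.mpr ⟨i₁, (aux_mem_negSet y i₁).mpr hi₁⟩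
      have hsumP : ∑ i ∈ posSet y, ⟪u, x i⟫
          = ((posSet y).card : ℝ) * ⟪u, x istar⟫ + (if j ∈ posSet y then t * y j else 0) := by
        rw [Finset.sum_congr rfl (fun i _ => hg i), Finset.sum_add_distrib,
          Finset.sum_const, nsmul_eq_mul, Finset.sum_ite_eq' (posSet y) j (fun _ => t * y j)]
      have hsumN : ∑ i ∈ negSet y, ⟪u, x i⟫
          = ((negSet y).card : ℝ) * ⟪u, x istar⟫ + (if j ∈ negSet y then t * y j else 0) := by
        rw [Finset.sum_congr rfl (fun i _ => hg i), Finset.sum_add_distrib,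
          Finset.sum_const, nsmul_eq_mul, Finset.sum_ite_eq' (negSet y) j (fun _ => t * y j)]
      have hum : ∃ r : ℝ, 0 < r ∧ ⟪u, m⟫ = t * r := by
        rcases hy j with hj1 | hj1
        · refine ⟨((posSet y).card : ℝ)⁻¹, inv_pos.mpr hp, ?_⟩
          have hjP : j ∈ posSet y := (aux_mem_posSet y j).mpr hj1
          have hjN : j ∉ negSet y := by rw [aux_mem_negSet, hj1]; norm_num
          rw [aux_inner_meanDiff, hsumP, hsumN, if_pos hjP, if_neg hjN, hj1]
          linear_combination ⟪u, x istar⟫ * inv_mul_cancel₀ hp.ne' - ⟪u, x istar⟫ * inv_mul_cancel₀ hq.ne'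
        · refine ⟨((negSet y).card : ℝ)⁻¹, inv_pos.mpr hq, ?_⟩
          have hjP : j ∉ posSet y := by rw [aux_mem_posSet, hj1]; norm_num
          have hjN : j ∈ negSet y := (aux_mem_negSet y j).mpr hj1
          rw [aux_inner_meanDiff, hsumP, hsumN, if_neg hjP, if_pos hjN, hj1]
          linear_combination ⟪u, x istar⟫ * inv_mul_cancel₀ hp.ne' - ⟪u, x istar⟫ * inv_mul_cancel₀ hq.ne'
      obtain ⟨r, hr, hur⟩ := hum
      have hwu : 0 < ⟪w, u⟫ := by
        have h1 : ⟪w, u⟫ = t * ⟪m, u⟫ := by rw [hwtm, real_inner_smul_left]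
        rw [h1, real_inner_comm u m] at *
        rw [hur]
        have h5 : t * (t * r) = (t * t) * r := by ring
        rw [h5]
        exact mul_pos (mul_self_pos.mpr ht) hr
      have hune : u ≠ 0 := by
        intro h0
        rw [h0, inner_zero_right] at hwu
        linarith
      have hu2 : 0 < ‖u‖ ^ 2 := pow_pos (norm_pos_iff.mpr hune) 2
      set ε := min ((y j * (⟪w, x j⟫ + b) - 1) / (|t| + 1)) (⟪w, u⟫ / ‖u‖ ^ 2) with hε
      have hε0 : 0 < ε :=
        lt_min (div_pos (by linarith) (by positivity)) (div_pos hwu hu2)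
      have hfeas2 : HardFeasible x y (w - ε • u) (b + ε * ⟪u, x istar⟫) := by
        intro i
        have hval : ⟪w - ε • u, x i⟫ + (b + ε * ⟪u, x istar⟫)
            = (⟪w, x i⟫ + b) - ε * (if i = j then t * y j else 0) := by
          rw [inner_sub_left, real_inner_smul_left, hg i]; ring
        rw [hval]
        rcases eq_or_ne i j with hij | hij
        · subst hij
          rw [if_pos rfl]
          have hyy : y i * y i = 1 := by rcases hy i with h | h <;> rw [h] <;> norm_num
          have hεt : ε * t ≤ y i * (⟪w, x i⟫ + b) - 1 := by
            have h1 : ε ≤ (y i * (⟪w, x i⟫ + b) - 1) / (|t| + 1) := min_le_left _ _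
            have h2 : ε * t ≤ ε * (|t| + 1) :=
              mul_le_mul_of_nonneg_left (by linarith [le_abs_self t]) hε0.le
            have h3 : ε * (|t| + 1) ≤ y i * (⟪w, x i⟫ + b) - 1 :=
              (le_div_iff₀ (by positivity : (0:ℝ) < |t| + 1)).mp h1
            linarith
          have hexp : y i * ((⟪w, x i⟫ + b) - ε * (t * y i))
              = y i * (⟪w, x i⟫ + b) - ε * t * (y i * y i) := by ring
          rw [hexp, hyy, mul_one]
          linarith
        · rw [if_neg hij, mul_zero, sub_zero]
          exact hsol.1 i
      have hlt : ‖w - ε • u‖ ^ 2 < ‖w‖ ^ 2 := by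
        have hns : ‖w - ε • u‖ ^ 2 = ‖w‖ ^ 2 - 2 * (ε * ⟪w, u⟫) + ε ^ 2 * ‖u‖ ^ 2 := by
          rw [norm_sub_sq_real, real_inner_smul_right, norm_smul, mul_pow,
            Real.norm_eq_abs, sq_abs]
        have hε2 : ε * ‖u‖ ^ 2 ≤ ⟪w, u⟫ := (le_div_iff₀ hu2).mp (min_le_right _ _)
        nlinarith [mul_le_mul_of_nonneg_left hε2 hε0.le]
      have hcontra := hsol.2 _ _ hfeas2
      nlinarith [hcontra, hlt]
    -- Step 2: m piles
    have hmp : ∀ i, ⟪m, x i⟫ = t⁻¹ * y i + (-b * t⁻¹) := by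
      intro i
      have h1 := htight i
      have h2 : ⟪w, x i⟫ + b = y i := by
        rcases hy i with h | h <;> rw [h] at h1 ⊢ <;> linarith
      have h3 : ⟪w, x i⟫ = t * ⟪m, x i⟫ := by rw [hwtm, real_inner_smul_left]
      have h4 : t * ⟪m, x i⟫ = y i - b := by linarith [h2, h3.symm.le]
      field_simp
      linarith [h4]
    -- Step 3: uniqueness of piling directions in the vectorSpan
    refine ⟨t⁻¹ * a⁻¹, by positivity, ?_⟩
    have hz : m - (t⁻¹ * a⁻¹) • v = 0 := by
      apply aux_eq_zero x _ (Submodule.sub_mem _ (aux_meanDiff_mem x y hpos hneg)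
        (Submodule.smul_mem _ _ hv_span))
      intro i j
      rw [inner_sub_left, inner_sub_left, real_inner_smul_left, real_inner_smul_left,
        hmp i, hmp j, hpil i, hpil j]
      field_simp
      ring
    have := sub_eq_zero.mp hz
    exact this
  · -- easy direction: m = t • v implies w ∝ m
    rintro ⟨t, ht, hmtv⟩
    set A := t * a with hA
    have hApile : ∀ i, ⟪m, x i⟫ = A * y i + t * c := by
      intro i
      rw [hmtv, real_inner_smul_left, hpil i]; ring
    have hAne : A ≠ 0 := mul_ne_zero ht ha
    have hmm : ⟪m, m⟫ = 2 * A := aux_pile_inner x y hpos hneg m A (t * c) hApile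
    have hApos : 0 < A := by
      rcases hAne.lt_or_gt with h | h
      · nlinarith [(real_inner_self_nonneg : (0:ℝ) ≤ ⟪m, m⟫)]
      · exact h
    have hmnorm : ‖m‖ ^ 2 = 2 * A := by rw [← real_inner_self_eq_norm_sq]; exact hmm
    have hmne : ‖m‖ ≠ 0 := by
      intro h0
      rw [h0] at hmnorm
      nlinarith
    -- candidate solution
    have hfeas : HardFeasible x y (A⁻¹ • m) (-(t * c) / A) := by
      intro i
      have : ⟪A⁻¹ • m, x i⟫ + -(t * c) / A = y i := by
        rw [real_inner_smul_left, hApile i]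
        field_simp
        ring
      rw [this]
      rcases hy i with h | h <;> rw [h] <;> norm_num
    have hwle := hsol.2 (A⁻¹ • m) (-(t * c) / A) hfeas
    have hwnorm : ‖A⁻¹ • m‖ ^ 2 = 2 / A := by
      rw [norm_smul, mul_pow, Real.norm_eq_abs, sq_abs, hmnorm]
      field_simp
    have hwub : ‖w‖ ^ 2 ≤ 2 / A := by rw [← hwnorm]; nlinarith [hwle]
    have hCS : ⟪w, m⟫ ≤ ‖w‖ * ‖m‖ := real_inner_le_norm w m
    have hwm2 : ‖w‖ * ‖m‖ ≤ 2 := by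
      have h1 : (‖w‖ * ‖m‖) ^ 2 ≤ 4 := by
        have : ‖w‖ ^ 2 * ‖m‖ ^ 2 ≤ (2 / A) * (2 * A) := by
          apply mul_le_mul hwub (le_of_eq hmnorm) (by positivity) (by positivity)
        calc (‖w‖ * ‖m‖) ^ 2 = ‖w‖ ^ 2 * ‖m‖ ^ 2 := by ring
          _ ≤ (2 / A) * (2 * A) := this
          _ = 4 := by field_simp; ring
      nlinarith [mul_nonneg (norm_nonneg w) (norm_nonneg m)]
    have heq : ⟪w, m⟫ = ‖w‖ * ‖m‖ := le_antisymm hCS (by linarith)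
    have hwne : ‖w‖ ≠ 0 := by
      intro h0
      have : w = 0 := norm_eq_zero.mp h0
      rw [this] at h2m
      simp only [inner_zero_left] at h2m
      linarith
    have hkey := inner_eq_norm_mul_iff_real.mp heq
    refine ⟨‖m‖⁻¹ * ‖w‖, by positivity, ?_⟩
    calc w = ‖m‖⁻¹ • (‖w‖ • m) := by
          rw [← hkey, smul_smul, inv_mul_cancel₀ hmne, one_smul]
      _ = (‖m‖⁻¹ * ‖w‖) • m := smul_smul _ _ _
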